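/- Let M ∈ R^{d×d} be positive definite. For all orthonormal matrices U, U' ∈ R^{d×(d-k)} with k < d, |√⟨UU^T, M⟩ - √⟨U'U'^T, M⟩| ≤ (σ_max(M)/√σ_min(M))·‖U - U'‖_F. -/

import Mathlib

open Matrix

-- quadratic form bounded by sup of eigenvalues
lemma quad_le {d : ℕ} {M : Matrix (Fin d) (Fin d) ℝ} (hM : M.IsHermitian)
    (x : Fin d → ℝ) :
    x ⬝ᵥ (M *ᵥ x) ≤ (⨆ i, hM.eigenvalues i) * (x ⬝ᵥ x) := by
  rcases Nat.eq_zero_or_pos d with h | h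
  · subst h; simp [dotProduct]
  have : Nonempty (Fin d) := ⟨⟨0, h⟩⟩
  set V : Matrix (Fin d) (Fin d) ℝ := (hM.eigenvectorUnitary : Matrix (Fin d) (Fin d) ℝ) with hV
  set y : Fin d → ℝ := Vᵀ *ᵥ x with hy
  have hVst : star V = Vᵀ := conjTranspose_eq_transpose_of_trivial V
  have hVV : V * Vᵀ = 1 := by
    rw [← hVst]; exact (Matrix.mem_unitaryGroup_iff).mp hM.eigenvectorUnitary.2
  have h1 : x ⬝ᵥ (M *ᵥ x) = ∑ i, hM.eigenvalues i * y i ^ 2 := by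
    conv_lhs => rw [hM.spectral_theorem, Unitary.conjStarAlgAut_apply]
    rw [hVst, ← mulVec_mulVec, ← mulVec_mulVec, dotProduct_mulVec,
      ← mulVec_transpose]
    simp [mulVec_diagonal, dotProduct, ← hV, ← hy, sq, mul_comm, mul_left_comm]
  have h2 : x ⬝ᵥ x = ∑ i, y i ^ 2 := by
    have : y ⬝ᵥ y = x ⬝ᵥ x := by
      rw [hy, dotProduct_mulVec, ← mulVec_transpose, transpose_transpose,
        mulVec_mulVec, hVV, one_mulVec]
    rw [← this]; simp [dotProduct, sq]
  rw [h1, h2, Finset.mul_sum]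
  refine Finset.sum_le_sum fun i _ => ?_
  exact mul_le_mul_of_nonneg_right (le_ciSup (Set.Finite.bddAbove (Set.finite_range _)) i) (sq_nonneg _)

lemma trace_quad {d m : ℕ} {M : Matrix (Fin d) (Fin d) ℝ} (hM : M.IsHermitian)
    (X : Matrix (Fin d) (Fin m) ℝ) :
    trace (Xᵀ * (M * X)) ≤ (⨆ i, hM.eigenvalues i) * trace (Xᵀ * X) := by
  have h1 : trace (Xᵀ * (M * X)) = ∑ j, (fun i => X i j) ⬝ᵥ (M *ᵥ fun i => X i j) := by
    simp [trace, Matrix.mul_apply, dotProduct, mulVec, diag, Finset.mul_sum]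
  have h2 : trace (Xᵀ * X) = ∑ j, (fun i => X i j) ⬝ᵥ (fun i => X i j) := by
    simp [trace, Matrix.mul_apply, dotProduct, diag]
  rw [h1, h2, Finset.mul_sum]
  exact Finset.sum_le_sum fun j _ => quad_le hM _

-- Frobenius norm via EuclideanSpace
noncomputable def toE {d m : ℕ} (X : Matrix (Fin d) (Fin m) ℝ) :
    EuclideanSpace ℝ (Fin d × Fin m) :=
  (WithLp.equiv 2 _).symm (fun p => X p.1 p.2)

lemma toE_sub {d m : ℕ} (X Y : Matrix (Fin d) (Fin m) ℝ) :
    toE X - toE Y = toE (X - Y) := rfl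

lemma norm_toE {d m : ℕ} (X : Matrix (Fin d) (Fin m) ℝ) :
    ‖toE X‖ = Real.sqrt (trace (Xᵀ * X)) := by
  rw [EuclideanSpace.norm_eq]
  congr 1
  rw [trace]
  simp only [diag, Matrix.mul_apply, transpose_apply]
  rw [Fintype.sum_prod_type, Finset.sum_comm]
  simp [toE, sq, Real.norm_eq_abs, abs_mul_abs_self]

lemma trace_sq_nonneg {d m : ℕ} (Y : Matrix (Fin d) (Fin m) ℝ) :
    0 ≤ trace (Yᵀ * Y) := by
  simp only [trace, diag, Matrix.mul_apply, transpose_apply]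
  exact Finset.sum_nonneg fun j _ => Finset.sum_nonneg fun i _ => mul_self_nonneg _

/-- For positive definite `M` and orthonormal `U, U' ∈ ℝ^{d × (d-k)}` with `k < d`,
`|√⟨U Uᵀ, M⟩ - √⟨U' U'ᵀ, M⟩| ≤ (σ_max(M)/√σ_min(M)) ‖U - U'‖_F`. -/
theorem stmt_5 {d k : ℕ} (hkd : k < d) (M : Matrix (Fin d) (Fin d) ℝ)
    (hM : M.PosDef) (U U' : Matrix (Fin d) (Fin (d - k)) ℝ)
    (hU : Uᵀ * U = 1) (hU' : U'ᵀ * U' = 1) :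
    |Real.sqrt (Matrix.trace ((U * Uᵀ)ᵀ * M)) - Real.sqrt (Matrix.trace ((U' * U'ᵀ)ᵀ * M))|
      ≤ ((⨆ i, hM.isHermitian.eigenvalues i) /
            Real.sqrt (⨅ i, hM.isHermitian.eigenvalues i)) *
          Real.sqrt (Matrix.trace ((U - U')ᵀ * (U - U'))) := by
  have hd : 0 < d := lt_of_le_of_lt (Nat.zero_le k) hkd
  have hne : Nonempty (Fin d) := ⟨⟨0, hd⟩⟩
  set σ := ⨆ i, hM.isHermitian.eigenvalues i with hσ
  set μ := ⨅ i, hM.isHermitian.eigenvalues i with hμ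
  obtain ⟨i₀, hi₀⟩ := exists_eq_ciInf_of_finite (f := hM.isHermitian.eigenvalues)
  have hμpos : 0 < μ := hμ ▸ hi₀ ▸ hM.eigenvalues_pos i₀
  have hμσ : μ ≤ σ := by
    rw [hμ, ← hi₀]
    exact le_ciSup (Set.Finite.bddAbove (Set.finite_range _)) i₀
  have hσpos : 0 < σ := lt_of_lt_of_le hμpos hμσ
  open scoped MatrixOrder in
  set S := CFC.sqrt M with hS
  open scoped MatrixOrder in
  have hSS : S * S = M := CFC.sqrt_mul_sqrt_self M hM.posSemidef.nonneg
  open scoped MatrixOrder in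
  have hSt : Sᵀ = S :=
    (conjTranspose_eq_transpose_of_trivial S).symm.trans (CFC.sqrt_nonneg M).posSemidef.1
  have key : ∀ X : Matrix (Fin d) (Fin (d - k)) ℝ,
      Real.sqrt (trace (Xᵀ * (M * X))) = ‖toE (S * X)‖ := by
    intro X
    have heq : Xᵀ * (M * X) = (S * X)ᵀ * (S * X) := by
      rw [transpose_mul, hSt, ← hSS]
      simp only [Matrix.mul_assoc]
    rw [heq, norm_toE]
  -- rewrite the two LHS traces
  have hrw : ∀ X : Matrix (Fin d) (Fin (d - k)) ℝ,
      trace ((X * Xᵀ)ᵀ * M) = trace (Xᵀ * (M * X)) := by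
    intro X
    rw [transpose_mul, transpose_transpose, Matrix.mul_assoc, trace_mul_comm, Matrix.mul_assoc]
  rw [hrw U, hrw U', key U, key U']
  have step1 : |‖toE (S * U)‖ - ‖toE (S * U')‖| ≤ ‖toE (S * (U - U'))‖ := by
    rw [Matrix.mul_sub, ← toE_sub]
    exact abs_norm_sub_norm_le _ _
  have step2 : ‖toE (S * (U - U'))‖ ≤ Real.sqrt σ * Real.sqrt (trace ((U - U')ᵀ * (U - U'))) := by
    rw [← key (U - U'), ← Real.sqrt_mul hσpos.le]
    exact Real.sqrt_le_sqrt (trace_quad hM.isHermitian (U - U'))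
  have step3 : Real.sqrt σ ≤ σ / Real.sqrt μ := by
    rw [le_div_iff₀ (Real.sqrt_pos.mpr hμpos)]
    calc Real.sqrt σ * Real.sqrt μ ≤ Real.sqrt σ * Real.sqrt σ :=
          mul_le_mul_of_nonneg_left (Real.sqrt_le_sqrt hμσ) (Real.sqrt_nonneg _)
      _ = σ := Real.mul_self_sqrt hσpos.le
  calc |‖toE (S * U)‖ - ‖toE (S * U')‖| ≤ ‖toE (S * (U - U'))‖ := step1
    _ ≤ Real.sqrt σ * Real.sqrt (trace ((U - U')ᵀ * (U - U'))) := step2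
    _ ≤ (σ / Real.sqrt μ) * Real.sqrt (trace ((U - U')ᵀ * (U - U'))) :=
        mul_le_mul_of_nonneg_right step3 (Real.sqrt_nonneg _)
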